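/- arXiv:1907.10504 — 2 statements merged into one kernel-verified Lean document; each statement's English description precedes it below -/
import Mathlib

section
/- (Locality of smoothness) Let M be an orbit-finite monoid. A sequence x₁, …, x_n of elements of M is smooth if and only if for every i < n the two-element sequence x_i, x_{i+1} is smooth. -/
/-- Atoms: a fixed countably infinite set. -/
abbrev Atom : Type := ℕ

/-- Atom automorphisms: bijections of the atoms. -/
abbrev AtomPerm : Type := Equiv.Perm Atom

/-- `x` (in a set with atoms `X`) is supported by the finite set `A` of atoms. -/
def SupportedBy {X : Type*} [MulAction AtomPerm X] (A : Finset Atom) (x : X) : Prop :=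
  ∀ π : AtomPerm, (∀ a ∈ A, π a = a) → π • x = x

def FinitelySupported {X : Type*} [MulAction AtomPerm X] (x : X) : Prop :=
  ∃ A : Finset Atom, SupportedBy A x

def IsLeastSupport {X : Type*} [MulAction AtomPerm X] (A : Finset Atom) (x : X) : Prop :=
  SupportedBy A x ∧ ∀ B : Finset Atom, SupportedBy B x → A ⊆ B

/-- A function `f : X → Y` is supported by `A` if `f (π • x) = π • f x`
for every `A`-automorphism `π`. -/
def FunSupportedBy {X Y : Type*} [MulAction AtomPerm X] [MulAction AtomPerm Y]
    (A : Finset Atom) (f : X → Y) : Prop :=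
  ∀ π : AtomPerm, (∀ a ∈ A, π a = a) → ∀ x : X, f (π • x) = π • f x

/-- A function is equivariant if it commutes with all atom automorphisms. -/
def FunEquivariant {X Y : Type*} [MulAction AtomPerm X] [MulAction AtomPerm Y]
    (f : X → Y) : Prop :=
  ∀ (π : AtomPerm) (x : X), f (π • x) = π • f x

/-- A subset `S` of a set with atoms is supported by `A`
(as an element of the powerset with the induced action). -/
def SetSupportedBy {Z : Type*} [MulAction AtomPerm Z] (A : Finset Atom) (S : Set Z) : Prop :=
  ∀ π : AtomPerm, (∀ a ∈ A, π a = a) → ∀ z : Z, z ∈ S ↔ π • z ∈ S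

/-- A set with atoms is orbit-finite if every element is finitely supported and, for some
finite set `A` of atoms, it is a union of finitely many orbits of the group of
`A`-automorphisms. -/
def OrbitFinite (X : Type*) [MulAction AtomPerm X] : Prop :=
  (∀ x : X, FinitelySupported x) ∧
  ∃ (A : Finset Atom) (reps : Finset X),
    ∀ x : X, ∃ r ∈ reps, ∃ π : AtomPerm, (∀ a ∈ A, π a = a) ∧ π • r = x

/-- The multiplication of a monoid with atoms is finitely supported. -/
def MulFinitelySupported (M : Type*) [Monoid M] [MulAction AtomPerm M] : Prop :=
  ∃ A : Finset Atom, ∀ π : AtomPerm, (∀ a ∈ A, π a = a) →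
    ∀ x y : M, π • (x * y) = (π • x) * (π • y)

/-- An orbit-finite monoid: the underlying set is orbit-finite and
multiplication is finitely supported. -/
def OrbitFiniteMonoid (M : Type*) [Monoid M] [MulAction AtomPerm M] : Prop :=
  OrbitFinite M ∧ MulFinitelySupported M

/-- `x` is an infix of `y`. -/
def MInfix {M : Type*} [Monoid M] (x y : M) : Prop := ∃ a b : M, y = a * x * b

/-- `x` is a prefix of `y`. -/
def MPrefix {M : Type*} [Monoid M] (x y : M) : Prop := ∃ a : M, y = x * a

/-- `x` is a suffix of `y`. -/
def MSuffix {M : Type*} [Monoid M] (x y : M) : Prop := ∃ a : M, y = a * x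

def JEquiv {M : Type*} [Monoid M] (x y : M) : Prop := MInfix x y ∧ MInfix y x
def REquiv {M : Type*} [Monoid M] (x y : M) : Prop := MPrefix x y ∧ MPrefix y x
def LEquiv {M : Type*} [Monoid M] (x y : M) : Prop := MSuffix x y ∧ MSuffix y x

/-- A sequence of monoid elements is smooth if every element of the sequence can be
recovered from the product of the whole sequence by multiplying on both sides. -/
def SmoothSeq {M : Type*} [Monoid M] (l : List M) : Prop :=
  ∀ x ∈ l, ∃ y z : M, y * l.prod * z = x

open Classical in
lemma exists_perm_extend (s : Finset ℕ) (f : ℕ → ℕ) (hinj : Set.InjOn f ↑s) :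
    ∃ π : Equiv.Perm ℕ, ∀ a ∈ s, π a = f a := by
  classical
  set S : Set ℕ := ↑s with hS
  set T : Set ℕ := f '' S with hT
  have hbij : Set.BijOn f S T := ⟨Set.mapsTo_image f S, hinj, Set.surjOn_image f S⟩
  have hSfin : S.Finite := s.finite_toSet
  have hTfin : T.Finite := hSfin.image f
  have h1 : Sᶜ.Infinite := hSfin.infinite_compl
  have h2 : Tᶜ.Infinite := hTfin.infinite_compl
  haveI := h1.to_subtype
  haveI := h2.to_subtype
  obtain ⟨d1⟩ := nonempty_denumerable ↥(Sᶜ)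
  obtain ⟨d2⟩ := nonempty_denumerable ↥(Tᶜ)
  let e2 : ↥(Sᶜ) ≃ ↥(Tᶜ) := (@Denumerable.eqv _ d1).trans (@Denumerable.eqv _ d2).symm
  let e1 : ↥S ≃ ↥T := hbij.equiv f
  refine ⟨(Equiv.Set.sumCompl S).symm.trans ((e1.sumCongr e2).trans (Equiv.Set.sumCompl T)), ?_⟩
  intro a ha
  have hmem : a ∈ S := by simpa [hS] using ha
  have h3 : (Equiv.Set.sumCompl S).symm a = Sum.inl ⟨a, hmem⟩ :=
    Equiv.Set.sumCompl_symm_apply_of_mem hmem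
  simp [h3, e1, Set.BijOn.equiv]

lemma supportedBy_smul {X : Type*} [MulAction AtomPerm X] {C : Finset Atom} {x : X}
    (h : SupportedBy C x) (π : AtomPerm) : SupportedBy (C.image π) (π • x) := by
  intro σ hσ
  have hfix : ∀ a ∈ C, (π⁻¹ * (σ * π)) a = a := by
    intro a ha
    have h1 : σ (π a) = π a := hσ (π a) (Finset.mem_image_of_mem π ha)
    simp [Equiv.Perm.mul_apply, h1]
  calc σ • π • x = (σ * π) • x := (mul_smul σ π x).symm
    _ = (π * (π⁻¹ * (σ * π))) • x := by group
    _ = π • ((π⁻¹ * (σ * π)) • x) := mul_smul _ _ _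
    _ = π • x := by rw [h _ hfix]

lemma finite_supportedBy {M : Type*} [MulAction AtomPerm M] (hM : OrbitFinite M)
    (B : Finset Atom) : {x : M | SupportedBy B x}.Finite := by
  classical
  obtain ⟨hfs, A, reps, hreps⟩ := hM
  choose C hC using hfs
  set N : ℕ := (A ∪ B).sup id + 1 with hN
  set F : M → Finset ℕ := fun r => (Finset.range (C r).card).image (fun i => N + i) with hF
  set D : M → Finset ℕ := fun r => A ∪ B ∪ F r with hD
  have hFdisj : ∀ r : M, ∀ a ∈ F r, a ∉ A ∪ B := by
    intro r a haF haAB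
    have h1 : a ≤ (A ∪ B).sup id := Finset.le_sup (f := id) haAB
    obtain ⟨i, _, rfl⟩ := Finset.mem_image.mp haF
    omega
  have hFcard : ∀ r : M, (F r).card = (C r).card := by
    intro r
    rw [hF]
    rw [Finset.card_image_of_injective _ (fun a b hab => by omega)]
    exact Finset.card_range _
  have hfin : ∀ r : M,
      Set.Finite {x : M | ∃ τ : AtomPerm, τ • r = x ∧ ∀ c ∈ C r, τ c ∈ D r} := by
    intro r
    set S := {x : M | ∃ τ : AtomPerm, τ • r = x ∧ ∀ c ∈ C r, τ c ∈ D r} with hSdef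
    have hch : ∀ x : S, ∃ τ : AtomPerm, τ • r = ↑x ∧ ∀ c ∈ C r, τ c ∈ D r := fun x => x.2
    choose τ hτ1 hτ2 using hch
    have hinj : Function.Injective
        (fun x : S => (fun c : {c // c ∈ C r} => (⟨τ x c, hτ2 x c c.2⟩ : {d // d ∈ D r}))) := by
      intro x y hxy
      have hagree : ∀ c ∈ C r, (τ x) c = (τ y) c := by
        intro c hc
        have h4 := congrFun hxy ⟨c, hc⟩
        simpa using h4
      have hfix : ∀ c ∈ C r, ((τ y)⁻¹ * τ x) c = c := by
        intro c hc; simp [Equiv.Perm.mul_apply, hagree c hc]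
      apply Subtype.ext
      rw [← hτ1 x, ← hτ1 y]
      calc (τ x) • r = (τ y * ((τ y)⁻¹ * τ x)) • r := by group
        _ = τ y • (((τ y)⁻¹ * τ x) • r) := mul_smul _ _ _
        _ = τ y • r := by rw [hC r _ hfix]
    haveI : Finite S := Finite.of_injective _ hinj
    exact Set.toFinite S
  refine Set.Finite.subset (Set.Finite.biUnion reps.finite_toSet (fun r _ => hfin r)) ?_
  intro x hx
  obtain ⟨r, hr, π, hπA, hπr⟩ := hreps x
  -- construct the normalizing permutation
  set E : Finset ℕ := (C r).image π \ (A ∪ B) with hE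
  have hEcard : E.card ≤ (F r).card := by
    rw [hFcard]
    calc E.card ≤ ((C r).image π).card := Finset.card_le_card (Finset.sdiff_subset)
      _ ≤ (C r).card := Finset.card_image_le
  obtain ⟨F', hF'sub, hF'card⟩ := Finset.exists_subset_card_eq hEcard
  set g : ℕ → ℕ := fun a =>
    if h : a ∈ E then ((F'.orderIsoOfFin hF'card) ((E.orderIsoOfFin rfl).symm ⟨a, h⟩) : ℕ)
    else a with hg
  have hgE : ∀ a ∈ E, g a ∈ F' := by
    intro a ha
    simp only [hg, dif_pos ha]
    exact ((F'.orderIsoOfFin hF'card) ((E.orderIsoOfFin rfl).symm ⟨a, ha⟩)).2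
  have hgid : ∀ a, a ∉ E → g a = a := by
    intro a ha; simp only [hg, dif_neg ha]
  have hginjE : ∀ a ∈ E, ∀ b ∈ E, g a = g b → a = b := by
    intro a ha b hb hab
    simp only [hg, dif_pos ha, dif_pos hb] at hab
    have h5 := (F'.orderIsoOfFin hF'card).injective (Subtype.ext hab)
    have h6 := (E.orderIsoOfFin rfl).symm.injective h5
    exact congrArg Subtype.val h6
  set s₀ : Finset ℕ := (A ∪ B) ∪ (C r).image π with hs₀
  have habmem : ∀ a ∈ s₀, a ∉ E → a ∈ A ∪ B := by
    intro a ha haE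
    rcases Finset.mem_union.mp ha with h | h
    · exact h
    · by_contra hn; exact haE (Finset.mem_sdiff.mpr ⟨h, hn⟩)
  have hginj : Set.InjOn g ↑s₀ := by
    intro a ha b hb hab
    rw [Finset.mem_coe] at ha hb
    by_cases haE : a ∈ E
    · by_cases hbE : b ∈ E
      · exact hginjE a haE b hbE hab
      · exfalso
        rw [hgid b hbE] at hab
        have h8 := hgE a haE
        rw [hab] at h8
        exact hFdisj r b (hF'sub h8) (habmem b hb hbE)
    · by_cases hbE : b ∈ E
      · exfalso
        rw [hgid a haE] at hab
        have h8 := hgE b hbE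
        rw [← hab] at h8
        exact hFdisj r a (hF'sub h8) (habmem a ha haE)
      · rw [hgid a haE, hgid b hbE] at hab; exact hab
  obtain ⟨σ, hσ⟩ := exists_perm_extend s₀ g hginj
  have hσAB : ∀ a ∈ A ∪ B, σ a = a := by
    intro a ha
    have has₀ : a ∈ s₀ := Finset.mem_union_left _ ha
    have haE : a ∉ E := fun h => (Finset.mem_sdiff.mp h).2 ha
    rw [hσ a has₀, hgid a haE]
  refine Set.mem_biUnion (Finset.mem_coe.mpr hr) ⟨σ * π, ?_, ?_⟩
  · have h9 : σ • x = x := hx σ (fun a ha => hσAB a (Finset.mem_union_right _ ha))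
    rw [mul_smul, hπr, h9]
  · intro c hc
    have hπc : π c ∈ (C r).image π := Finset.mem_image_of_mem π hc
    have hs₀mem : π c ∈ s₀ := Finset.mem_union_right _ hπc
    show σ (π c) ∈ D r
    rw [hσ _ hs₀mem]
    by_cases hE2 : π c ∈ E
    · exact Finset.mem_union_right _ (hF'sub (hgE _ hE2))
    · rw [hgid _ hE2]
      exact Finset.mem_union_left _ (habmem _ hs₀mem hE2)

lemma exists_idempotent_pow {M : Type*} [Monoid M] [MulAction AtomPerm M]
    (hM : OrbitFiniteMonoid M) (u : M) : ∃ n : ℕ, 1 ≤ n ∧ u ^ n * u ^ n = u ^ n := by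
  classical
  obtain ⟨hOF, Am, hAm⟩ := hM
  obtain ⟨Au, hAu⟩ := hOF.1 u
  set B : Finset Atom := Au ∪ Am with hB
  have hpow : ∀ n : ℕ, SupportedBy B (u ^ (n + 1)) := by
    intro n
    induction n with
    | zero =>
      intro π hπ
      simpa [pow_one] using hAu π (fun a ha => hπ a (Finset.mem_union_left _ ha))
    | succ k ih =>
      intro π hπ
      have h1 : π • u = u := hAu π (fun a ha => hπ a (Finset.mem_union_left _ ha))
      have h2 := hAm π (fun a ha => hπ a (Finset.mem_union_right _ ha)) u (u ^ (k + 1))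
      rw [show u ^ (k + 1 + 1) = u * u ^ (k + 1) by rw [← pow_succ']]
      rw [h2, h1, ih π hπ]
  have hfin : {x : M | SupportedBy B x}.Finite := finite_supportedBy hOF B
  haveI : Finite {x : M | SupportedBy B x} := hfin.to_subtype
  obtain ⟨m, m', hne, heq⟩ := Finite.exists_ne_map_eq_of_infinite
      (f := fun n : ℕ => (⟨u ^ (n + 1), hpow n⟩ : {x : M | SupportedBy B x}))
  have heq' : u ^ (m + 1) = u ^ (m' + 1) := by
    simpa using Subtype.ext_iff.mp heq
  -- normalize to a < a + k
  obtain ⟨a, k, ha, hk, hper⟩ : ∃ a k : ℕ, 1 ≤ a ∧ 1 ≤ k ∧ u ^ (a + k) = u ^ a := by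
    rcases Nat.lt_or_ge m m' with h | h
    · exact ⟨m + 1, m' - m, by omega, by omega, by rw [show m + 1 + (m' - m) = m' + 1 by omega, heq']⟩
    · have h' : m' < m := by omega
      exact ⟨m' + 1, m - m', by omega, by omega, by rw [show m' + 1 + (m - m') = m + 1 by omega, heq']⟩
  have step : ∀ b, a ≤ b → u ^ (b + k) = u ^ b := by
    intro b hb
    obtain ⟨c, rfl⟩ := Nat.exists_eq_add_of_le hb
    rw [show a + c + k = (a + k) + c by omega, pow_add, hper, ← pow_add]
  have key : ∀ j, u ^ (a * k + j * k) = u ^ (a * k) := by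
    intro j
    induction j with
    | zero => simp
    | succ i ih =>
      rw [show a * k + (i + 1) * k = (a * k + i * k) + k by ring]
      rw [step _ (by nlinarith), ih]
  refine ⟨a * k, by nlinarith, ?_⟩
  rw [← pow_add]
  exact key a

lemma r_stab {M : Type*} [Monoid M] [MulAction AtomPerm M] (hM : OrbitFiniteMonoid M)
    {x y u v : M} (h : x = u * (x * y) * v) : ∃ t : M, x = (x * y) * t := by
  set w : M := y * v with hw
  have h' : x = u * x * w := by
    conv_lhs => rw [h]
    simp [hw, mul_assoc]
  have hiter : ∀ n : ℕ, x = u ^ n * x * w ^ n := by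
    intro n
    induction n with
    | zero => simp
    | succ i ih =>
      calc x = u * x * w := h'
        _ = u * (u ^ i * x * w ^ i) * w := by rw [← ih]
        _ = u ^ (i + 1) * x * w ^ (i + 1) := by
            rw [pow_succ', pow_succ]; simp [mul_assoc]
  obtain ⟨n, hn1, hidem⟩ := exists_idempotent_pow hM w
  have hx : x * w ^ n = x := by
    calc x * w ^ n = (u ^ n * x * w ^ n) * w ^ n := by rw [← hiter n]
      _ = u ^ n * x * (w ^ n * w ^ n) := by simp [mul_assoc]
      _ = u ^ n * x * w ^ n := by rw [hidem]
      _ = x := (hiter n).symm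
  obtain ⟨p, rfl⟩ : ∃ p, n = p + 1 := ⟨n - 1, by omega⟩
  refine ⟨v * w ^ p, ?_⟩
  have hsplit : w ^ (p + 1) = w * w ^ p := by rw [pow_succ']
  calc x = x * w ^ (p + 1) := hx.symm
    _ = x * (y * v * w ^ p) := by rw [hsplit, hw]
    _ = (x * y) * (v * w ^ p) := by simp [mul_assoc]

lemma l_stab {M : Type*} [Monoid M] [MulAction AtomPerm M] (hM : OrbitFiniteMonoid M)
    {x y u v : M} (h : x = u * (y * x) * v) : ∃ t : M, x = t * (y * x) := by
  set w : M := u * y with hw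
  have h' : x = w * x * v := by
    conv_lhs => rw [h]
    simp [hw, mul_assoc]
  have hiter : ∀ n : ℕ, x = w ^ n * x * v ^ n := by
    intro n
    induction n with
    | zero => simp
    | succ i ih =>
      calc x = w * x * v := h'
        _ = w * (w ^ i * x * v ^ i) * v := by rw [← ih]
        _ = w ^ (i + 1) * x * v ^ (i + 1) := by
            rw [pow_succ', pow_succ]; simp [mul_assoc]
  obtain ⟨n, hn1, hidem⟩ := exists_idempotent_pow hM w
  have hx : w ^ n * x = x := by
    calc w ^ n * x = w ^ n * (w ^ n * x * v ^ n) := by rw [← hiter n]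
      _ = (w ^ n * w ^ n) * x * v ^ n := by simp [mul_assoc]
      _ = w ^ n * x * v ^ n := by rw [hidem]
      _ = x := (hiter n).symm
  obtain ⟨p, rfl⟩ : ∃ p, n = p + 1 := ⟨n - 1, by omega⟩
  refine ⟨w ^ p * u, ?_⟩
  have hsplit : w ^ (p + 1) = w ^ p * w := by rw [pow_succ]
  calc x = w ^ (p + 1) * x := hx.symm
    _ = w ^ p * (u * y) * x := by rw [hsplit, hw]
    _ = (w ^ p * u) * (y * x) := by simp [mul_assoc]
/-- (Locality of smoothness) In an orbit-finite monoid, a sequence `x₁, …, x_n` is smooth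
if and only if every two-element subsequence `x_i, x_{i+1}` of consecutive elements is
smooth. -/
theorem smooth_iff_locally_smooth {M : Type*} [Monoid M] [MulAction AtomPerm M]
    (hM : OrbitFiniteMonoid M) (l : List M) :
    SmoothSeq l ↔ ∀ (i : ℕ) (h : i + 1 < l.length),
      SmoothSeq [l.get ⟨i, by omega⟩, l.get ⟨i + 1, h⟩] := by
  constructor
  · intro hs i h
    have hi : i < l.length := by omega
    have hdecomp : l.prod = (l.take i).prod * (l[i] * l[i + 1]) * (l.drop (i + 2)).prod := by
      rw [← List.prod_take_mul_prod_drop l (i + 2), List.prod_take_succ l (i + 1) h,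
        List.prod_take_succ l i hi]
      simp [mul_assoc]
    intro x hx
    simp only [List.get_eq_getElem, List.mem_cons, List.not_mem_nil, or_false] at hx
    rcases hx with rfl | rfl
    · obtain ⟨y, z, hyz⟩ := hs l[i] (List.getElem_mem hi)
      refine ⟨y * (l.take i).prod, (l.drop (i + 2)).prod * z, ?_⟩
      rw [hdecomp] at hyz
      rw [← hyz]
      simp [mul_assoc]
    · obtain ⟨y, z, hyz⟩ := hs l[i + 1] (List.getElem_mem h)
      refine ⟨y * (l.take i).prod, (l.drop (i + 2)).prod * z, ?_⟩
      rw [hdecomp] at hyz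
      rw [← hyz]
      simp [mul_assoc]
  · intro hp
    have key1 : ∀ i (h : i + 1 < l.length), ∃ t : M, l[i]'(by omega) = (l[i]'(by omega) * l[i + 1]'h) * t := by
      intro i h
      obtain ⟨y, z, hyz⟩ := hp i h (l.get ⟨i, by omega⟩) List.mem_cons_self
      simp only [List.get_eq_getElem, List.prod_cons, List.prod_nil, mul_one] at hyz
      exact r_stab hM hyz.symm
    have key2 : ∀ i (h : i + 1 < l.length), ∃ t : M, l[i + 1]'h = t * (l[i]'(by omega) * l[i + 1]'h) := by
      intro i h
      obtain ⟨y, z, hyz⟩ := hp i h (l.get ⟨i + 1, h⟩)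
        (List.mem_cons_of_mem _ List.mem_cons_self)
      simp only [List.get_eq_getElem, List.prod_cons, List.prod_nil, mul_one] at hyz
      exact l_stab hM hyz.symm
    have claim2 : ∀ i, (hi : i < l.length) → ∃ R : M, l[i] = R * (l.take (i + 1)).prod := by
      intro i
      induction i with
      | zero =>
        intro hi
        refine ⟨1, ?_⟩
        rw [List.prod_take_succ l 0 hi]
        simp
      | succ j ih =>
        intro hi
        have hj : j < l.length := by omega
        obtain ⟨R, hR⟩ := ih hj
        obtain ⟨t, ht⟩ := key2 j hi
        refine ⟨t * R, ?_⟩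
        rw [List.prod_take_succ l (j + 1) hi]
        calc l[j + 1] = t * (l[j] * l[j + 1]) := ht
          _ = t * ((R * (l.take (j + 1)).prod) * l[j + 1]) := by rw [← hR]
          _ = t * R * ((l.take (j + 1)).prod * l[j + 1]) := by simp [mul_assoc]
    have claim3 : ∀ k i, (hi : i < l.length) → l.length - 1 - i = k →
        ∃ Cc : M, l[i] = (l.drop i).prod * Cc := by
      intro k
      induction k with
      | zero =>
        intro i hi hk
        refine ⟨1, ?_⟩
        rw [List.drop_eq_getElem_cons hi, List.drop_eq_nil_of_le (by omega : l.length ≤ i + 1)]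
        simp
      | succ j ih =>
        intro i hi hk
        have h1 : i + 1 < l.length := by omega
        obtain ⟨Cc, hCc⟩ := ih (i + 1) h1 (by omega)
        obtain ⟨t, ht⟩ := key1 i h1
        refine ⟨Cc * t, ?_⟩
        rw [List.drop_eq_getElem_cons hi, List.prod_cons]
        calc l[i] = (l[i] * l[i + 1]) * t := ht
          _ = (l[i] * ((l.drop (i + 1)).prod * Cc)) * t := by rw [← hCc]
          _ = l[i] * (l.drop (i + 1)).prod * (Cc * t) := by simp [mul_assoc]
    intro x hx
    obtain ⟨⟨i, hi⟩, rfl⟩ := List.mem_iff_get.mp hx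
    obtain ⟨R, hR⟩ := claim2 i hi
    obtain ⟨Cc, hCc⟩ := claim3 (l.length - 1 - i) i hi rfl
    refine ⟨R, Cc, ?_⟩
    simp only [List.get_eq_getElem]
    have hfinal : l[i] = R * l.prod * Cc := by
      calc l[i] = R * (l.take (i + 1)).prod := hR
        _ = R * ((l.take i).prod * l[i]) := by rw [List.prod_take_succ l i hi]
        _ = R * ((l.take i).prod * ((l.drop i).prod * Cc)) := by rw [hCc]
        _ = R * l.prod * Cc := by
            rw [← List.prod_take_mul_prod_drop l i]
            simp only [mul_assoc]
    exact hfinal.symm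
end

section
/- Let M be an orbit-finite monoid acting on the right on a set Q̄, and let Q→ ⊆ Q̄ be a subset such that every element of Q̄ outside Q→ is fixed by the action (q·m = q for all m ∈ M whenever q ∉ Q→). Then for every smooth sequence m₁, …, m_k of elements of M and every q ∈ Q̄: q·m₁ belongs to Q→ if and only if q·(m₁⋯m_k) belongs to Q→, and if q·m₁ ∉ Q→ then q·m₁ = q·(m₁⋯m_k). In particular, q·m₁ and q·(m₁⋯m_k) have the same type with respect to any classification that distinguishes the elements outside Q→. -/
section SmoothHelpers

open Classical

/-- Supports are monotone. -/
lemma SupportedBy.mono {X : Type*} [MulAction AtomPerm X] {A B : Finset Atom} {x : X}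
    (hAB : A ⊆ B) (h : SupportedBy A x) : SupportedBy B x :=
  fun π hπ => h π (fun a ha => hπ a (hAB ha))

/-- Any injection defined on a finite set of atoms extends to an atom permutation. -/
lemma exists_perm_extend_s13 (D : Finset Atom) (f : Atom → Atom) (hinj : Set.InjOn f D) :
    ∃ τ : AtomPerm, ∀ x ∈ D, τ x = f x := by
  classical
  set E : Finset Atom := D ∪ D.image f with hE
  have hDE : D ⊆ E := Finset.subset_union_left
  have hfDE : D.image f ⊆ E := Finset.subset_union_right
  have hcardim : (D.image f).card = D.card := Finset.card_image_of_injOn hinj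
  have hcard : (E \ D).card = (E \ D.image f).card := by
    rw [Finset.card_sdiff_of_subset hDE, Finset.card_sdiff_of_subset hfDE, hcardim]
  let e : ↥(E \ D) ≃ ↥(E \ D.image f) := Finset.equivOfCardEq hcard
  have hmem : ∀ (x : ↥E), (x : Atom) ∉ D → (x : Atom) ∈ E \ D :=
    fun x h => Finset.mem_sdiff.2 ⟨x.2, h⟩
  let g : ↥E → ↥E := fun x =>
    if h : (x : Atom) ∈ D then ⟨f x, hfDE (Finset.mem_image_of_mem f h)⟩
    else ⟨(e ⟨x, hmem x h⟩ : Atom), Finset.sdiff_subset (e ⟨x, hmem x h⟩).2⟩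
  have hginj : Function.Injective g := by
    intro x y hxy
    by_cases hx : (x : Atom) ∈ D <;> by_cases hy : (y : Atom) ∈ D
    · have : f x = f y := by
        have := congrArg Subtype.val hxy
        simpa [g, hx, hy] using this
      exact Subtype.ext (hinj hx hy this)
    · exfalso
      have hv := congrArg Subtype.val hxy
      simp only [g, dif_pos hx, dif_neg hy] at hv
      have h1 : f (x : Atom) ∈ D.image f := Finset.mem_image_of_mem f hx
      have h2 := (e ⟨y, hmem y hy⟩).2
      rw [Finset.mem_sdiff] at h2
      exact h2.2 (hv ▸ h1)
    · exfalso
      have hv := congrArg Subtype.val hxy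
      simp only [g, dif_neg hx, dif_pos hy] at hv
      have h1 : f (y : Atom) ∈ D.image f := Finset.mem_image_of_mem f hy
      have h2 := (e ⟨x, hmem x hx⟩).2
      rw [Finset.mem_sdiff] at h2
      exact h2.2 (hv ▸ h1)
    · have hv := congrArg Subtype.val hxy
      simp only [g, dif_neg hx, dif_neg hy] at hv
      have : e ⟨x, hmem x hx⟩ = e ⟨y, hmem y hy⟩ := Subtype.ext hv
      have h3 := e.injective this
      have h4 : (x : Atom) = (y : Atom) := Subtype.mk_eq_mk.mp h3
      exact Subtype.ext h4
  have hgbij : Function.Bijective g := Finite.injective_iff_bijective.1 hginj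
  let gE : Equiv.Perm ↥E := Equiv.ofBijective g hgbij
  let τ : AtomPerm := gE.extendDomain (Equiv.refl {x : Atom // x ∈ E})
  refine ⟨τ, fun x hx => ?_⟩
  have hxE : x ∈ E := hDE hx
  have := Equiv.Perm.extendDomain_apply_subtype gE (Equiv.refl {x : Atom // x ∈ E}) hxE
  rw [this]
  simp only [Equiv.refl_symm, Equiv.refl_apply]
  have : gE ⟨x, hxE⟩ = g ⟨x, hxE⟩ := rfl
  rw [this]
  simp [g, dif_pos hx]

/-- In an orbit-finite set, only finitely many elements are supported by a given
finite set of atoms. -/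
lemma supported_finite {X : Type*} [MulAction AtomPerm X] (h : OrbitFinite X)
    (B : Finset Atom) : {x : X | SupportedBy B x}.Finite := by
  classical
  obtain ⟨hfs, A, reps, hreps⟩ := h
  set supp : X → Finset Atom := fun x => (hfs x).choose with hsupp
  have hsuppspec : ∀ x : X, SupportedBy (supp x) x := fun x => (hfs x).choose_spec
  set B' : Finset Atom := A ∪ B with hB'
  set C : Finset Atom := reps.sup supp with hC
  have hmain : {x : X | SupportedBy B' x}.Finite := by
    have key : ∀ x : X, ∃ rp : X × AtomPerm,
        rp.1 ∈ reps ∧ (∀ a ∈ A, rp.2 a = a) ∧ rp.2 • rp.1 = x := by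
      intro x
      obtain ⟨r, hr, π, hπ, he⟩ := hreps x
      exact ⟨(r, π), hr, hπ, he⟩
    choose rp hrp1 hrp2 hrp3 using key
    rw [← Set.finite_coe_iff]
    let Φ : {x : X | SupportedBy B' x} → ↥reps × (↥C → Option ↥B') := fun x =>
      (⟨(rp x).1, hrp1 x⟩,
        fun c => if h : (rp x).2 (c : Atom) ∈ B' then some ⟨(rp x).2 (c : Atom), h⟩ else none)
    have hΦ : Function.Injective Φ := by
      intro x y hxy
      have hr : (rp (x : X)).1 = (rp (y : X)).1 := by
        have := congrArg Prod.fst hxy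
        exact congrArg Subtype.val this
      have hfun := congrArg Prod.snd hxy
      set π : AtomPerm := (rp (x : X)).2 with hπdef
      set σ : AtomPerm := (rp (y : X)).2 with hσdef
      set r : X := (rp (x : X)).1 with hrdef
      -- extract pointwise data
      have hdata : ∀ c ∈ C, (π c ∈ B' ↔ σ c ∈ B') ∧ (π c ∈ B' → π c = σ c) := by
        intro c hc
        have := congrFun hfun ⟨c, hc⟩
        by_cases h1 : π c ∈ B' <;> by_cases h2 : σ c ∈ B'
        · refine ⟨by simp [h1, h2], fun _ => ?_⟩
          simp only [Φ, ← hπdef, ← hσdef, dif_pos h1, dif_pos h2] at this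
          exact congrArg Subtype.val (Option.some_injective _ this)
        · exfalso; simp only [Φ, ← hπdef, ← hσdef, dif_pos h1, dif_neg h2] at this
          exact Option.some_ne_none _ this
        · exfalso; simp only [Φ, ← hπdef, ← hσdef, dif_neg h1, dif_pos h2] at this
          exact Option.some_ne_none _ this.symm
        · exact ⟨by simp [h1, h2], fun h => absurd h h1⟩
      -- build the permutation fixing B' that carries π c to σ c
      set D : Finset Atom := B' ∪ C.image π with hD
      set f : Atom → Atom := fun a => if a ∈ B' then a else σ (π.symm a) with hf
      have hinj : Set.InjOn f D := by
        intro a1 h1 a2 h2 heq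
        by_cases hb1 : a1 ∈ B' <;> by_cases hb2 : a2 ∈ B'
        · simpa [f, hb1, hb2] using heq
        · exfalso
          have h2' : a2 ∈ C.image π := by
            rcases Finset.mem_union.1 h2 with h | h
            · exact absurd h hb2
            · exact h
          obtain ⟨c, hc, rfl⟩ := Finset.mem_image.1 h2'
          have hσc : σ c ∉ B' := fun hh => hb2 (((hdata c hc).1).2 hh)
          have : f (π c) = σ c := by
            simp [f, hb2]
          rw [this] at heq
          have : f a1 = a1 := by simp [f, hb1]
          rw [this] at heq
          exact hσc (heq ▸ hb1)
        · exfalso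
          have h1' : a1 ∈ C.image π := by
            rcases Finset.mem_union.1 h1 with h | h
            · exact absurd h hb1
            · exact h
          obtain ⟨c, hc, rfl⟩ := Finset.mem_image.1 h1'
          have hσc : σ c ∉ B' := fun hh => hb1 (((hdata c hc).1).2 hh)
          have e1 : f (π c) = σ c := by simp [f, hb1]
          have e2 : f a2 = a2 := by simp [f, hb2]
          rw [e1, e2] at heq
          exact hσc (heq.symm ▸ hb2)
        · have h1' : a1 ∈ C.image π := by
            rcases Finset.mem_union.1 h1 with h | h
            · exact absurd h hb1
            · exact h
          have h2' : a2 ∈ C.image π := by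
            rcases Finset.mem_union.1 h2 with h | h
            · exact absurd h hb2
            · exact h
          obtain ⟨c1, hc1, rfl⟩ := Finset.mem_image.1 h1'
          obtain ⟨c2, hc2, rfl⟩ := Finset.mem_image.1 h2'
          have e1 : f (π c1) = σ c1 := by simp [f, hb1]
          have e2 : f (π c2) = σ c2 := by simp [f, hb2]
          rw [e1, e2] at heq
          exact congrArg π (σ.injective heq)
      obtain ⟨τ, hτ⟩ := exists_perm_extend_s13 D f hinj
      have hτB : ∀ b ∈ B', τ b = b := by
        intro b hb
        rw [hτ b (Finset.mem_union_left _ hb)]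
        simp [f, hb]
      have hτC : ∀ c ∈ C, τ (π c) = σ c := by
        intro c hc
        rw [hτ (π c) (Finset.mem_union_right _ (Finset.mem_image_of_mem π hc))]
        by_cases hb : π c ∈ B'
        · have := ((hdata c hc).2) hb
          simp [f, hb, ← this]
        · simp [f, hb]
      -- r is supported by C
      have hrC : SupportedBy C r := by
        refine SupportedBy.mono ?_ (hsuppspec r)
        exact Finset.le_sup (f := supp) (hrp1 (x : X))
      -- the permutation σ⁻¹ * τ * π fixes C pointwise
      have hfix : ∀ c ∈ C, (σ⁻¹ * (τ * π)) c = c := by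
        intro c hc
        have : (σ⁻¹ * (τ * π)) c = σ⁻¹ (τ (π c)) := rfl
        rw [this, hτC c hc]
        exact σ.symm_apply_apply c
      have hρ : (σ⁻¹ * (τ * π)) • r = r := hrC _ hfix
      have hcalc : (τ * π) • r = σ • r := by
        have := congrArg (fun u => σ • u) hρ
        simpa [← mul_smul, mul_assoc] using this
      have hx' : π • r = (x : X) := hrp3 (x : X)
      have hy' : σ • ((rp (y : X)).1) = (y : X) := hrp3 (y : X)
      have hy'' : σ • r = (y : X) := by rw [hr]; exact hy'
      have hτx : τ • (x : X) = (x : X) := x.2 τ hτB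
      have : (x : X) = (y : X) := by
        rw [← hτx, ← hx', ← mul_smul, hcalc, hy'']
      exact Subtype.ext this
    exact Finite.of_injective Φ hΦ
  refine hmain.subset ?_
  intro x hx
  exact SupportedBy.mono Finset.subset_union_right hx

/-- In an orbit-finite monoid, if `x = y * x * w` then `x = (x * w) * s` for some `s`. -/
lemma exists_pow_absorb {M : Type*} [Monoid M] [MulAction AtomPerm M]
    (hM : OrbitFiniteMonoid M) (x y w : M) (hx : x = y * x * w) :
    ∃ s : M, x = (x * w) * s := by
  obtain ⟨hOF, Amul, hmulsupp⟩ := hM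
  obtain ⟨Aw, hAw⟩ := hOF.1 w
  set B : Finset Atom := Amul ∪ Aw with hB
  have hpow : ∀ n : ℕ, SupportedBy B (w ^ (n + 1)) := by
    intro n
    induction n with
    | zero => simpa [pow_one] using SupportedBy.mono Finset.subset_union_right hAw
    | succ n ih =>
      intro π hπ
      rw [pow_succ, hmulsupp π (fun a ha => hπ a (Finset.mem_union_left _ ha)),
        ih π hπ, hAw π (fun a ha => hπ a (Finset.mem_union_right _ ha))]
  have hfin := supported_finite hOF B
  have hninj : ¬ Function.Injective (fun n : ℕ => w ^ (n + 1)) := by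
    intro hinj
    have hinf := Set.infinite_range_of_injective hinj
    refine hinf (hfin.subset ?_)
    rintro _ ⟨n, rfl⟩
    exact hpow n
  obtain ⟨i, j, hij, hne⟩ := Function.not_injective_iff.1 hninj
  -- wlog : get a < b with w ^ a = w ^ b, 1 ≤ a
  obtain ⟨a, b, hab, hlt, ha1⟩ :
      ∃ a b : ℕ, w ^ a = w ^ b ∧ a < b ∧ 1 ≤ a := by
    rcases Nat.lt_or_ge i j with h | h
    · exact ⟨i + 1, j + 1, hij, by omega, by omega⟩
    · have : j < i := by omega
      exact ⟨j + 1, i + 1, hij.symm, by omega, by omega⟩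
  set p : ℕ := b - a with hp
  have hp1 : 1 ≤ p := by omega
  have hbap : b = a + p := by omega
  have haux : ∀ m, a ≤ m → w ^ (m + p) = w ^ m := by
    intro m hm
    obtain ⟨d, rfl⟩ : ∃ d, m = a + d := ⟨m - a, by omega⟩
    have h1 : a + d + p = b + d := by omega
    have h2 : w ^ (b + d) = w ^ (a + d) := by rw [pow_add, pow_add, hab]
    rw [h1, h2]
  have haux2 : ∀ k m, a ≤ m → w ^ (m + k * p) = w ^ m := by
    intro k
    induction k with
    | zero => intro m _; simp
    | succ k ih =>
      intro m hm
      have h1 : m + (k + 1) * p = (m + k * p) + p := by ring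
      rw [h1, haux _ (by omega), ih m hm]
  set n : ℕ := a * p with hn
  have hn1 : 1 ≤ n := by
    have := Nat.mul_le_mul ha1 hp1
    simpa [hn] using this
  have hna : a ≤ n := by
    calc a = a * 1 := by ring
    _ ≤ a * p := Nat.mul_le_mul_left a hp1
  have hidem : w ^ n * w ^ n = w ^ n := by
    rw [← pow_add]
    have : n + n = n + a * p := by rw [hn]
    rw [this, haux2 a n hna]
  have hxk : ∀ k : ℕ, x = y ^ k * x * w ^ k := by
    intro k
    induction k with
    | zero => simp
    | succ k ih =>
      calc x = y * x * w := hx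
      _ = y * (y ^ k * x * w ^ k) * w := by rw [← ih]
      _ = y ^ (k + 1) * x * w ^ (k + 1) := by
          rw [pow_succ', pow_succ]
          simp only [mul_assoc]
  have habs : x * w ^ n = x := by
    calc x * w ^ n = (y ^ n * x * w ^ n) * w ^ n := by rw [← hxk n]
    _ = y ^ n * x * (w ^ n * w ^ n) := by simp only [mul_assoc]
    _ = y ^ n * x * w ^ n := by rw [hidem]
    _ = x := (hxk n).symm
  refine ⟨w ^ (n - 1), ?_⟩
  have hsplit : w * w ^ (n - 1) = w ^ n := by
    have h9 : n - 1 + 1 = n := by omega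
    rw [← pow_succ', h9]
  rw [mul_assoc, hsplit, habs]

end SmoothHelpers

/-- Let an orbit-finite monoid act on the right on `Q̄`, and let `Q→ ⊆ Q̄` be such that all
elements outside `Q→` are fixed by the action. Then for every smooth sequence
`m₁, …, m_k` and every `q`: `q·m₁ ∈ Q→` iff `q·(m₁⋯m_k) ∈ Q→`, and if `q·m₁ ∉ Q→` then
`q·m₁ = q·(m₁⋯m_k)`. -/
theorem smooth_same_type {M : Type*} [Monoid M] [MulAction AtomPerm M]
    (hM : OrbitFiniteMonoid M) {Q : Type*}
    (act : Q → M → Q)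
    (hone : ∀ q : Q, act q 1 = q)
    (hmul : ∀ (q : Q) (m n : M), act q (m * n) = act (act q m) n)
    (Qright : Set Q) (hfix : ∀ q ∉ Qright, ∀ m : M, act q m = q)
    (l : List M) (hne : l ≠ []) (hsm : SmoothSeq l) :
    ∀ q : Q,
      (act q (l.head hne) ∈ Qright ↔ act q l.prod ∈ Qright) ∧
      (act q (l.head hne) ∉ Qright → act q (l.head hne) = act q l.prod) := by
  classical
  intro q
  have hlt : l.head hne :: l.tail = l := List.cons_head_tail hne
  set m₁ : M := l.head hne with hm₁
  have hP : l.prod = m₁ * l.tail.prod := by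
    conv_lhs => rw [← hlt]
    rw [List.prod_cons]
  have hmem : m₁ ∈ l := by rw [← hlt]; exact List.mem_cons_self
  obtain ⟨y, z, hyz⟩ := hsm m₁ hmem
  have hx : m₁ = y * m₁ * (l.tail.prod * z) := by
    have hassoc : y * (m₁ * l.tail.prod) * z = y * m₁ * (l.tail.prod * z) := by
      simp only [mul_assoc]
    rw [← hassoc, ← hP]
    exact hyz.symm
  obtain ⟨s, hs⟩ := exists_pow_absorb hM m₁ y (l.tail.prod * z) hx
  have hm : m₁ = l.prod * (z * s) := by
    rw [hP]
    calc m₁ = m₁ * (l.tail.prod * z) * s := hs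
    _ = m₁ * l.tail.prod * (z * s) := by rw [mul_assoc, mul_assoc, mul_assoc]
  have h1 : act q m₁ ∉ Qright → act q m₁ = act q l.prod := by
    intro h
    rw [hP, hmul]
    exact (hfix _ h _).symm
  have h2 : act q l.prod ∉ Qright → act q m₁ = act q l.prod := by
    intro h
    conv_lhs => rw [hm]
    rw [hmul]
    exact hfix _ h _
  refine ⟨⟨fun h => ?_, fun h => ?_⟩, h1⟩
  · by_contra h'
    rw [h2 h'] at h
    exact h' h
  · by_contra h'
    rw [h1 h'] at h'
    exact h' h
end
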